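/- For J = diag(J₁,J₂,J₃) with pairwise distinct entries and L ∈ ℝ³ with L₁L₂L₃ ≠ 0, define V⁰ = L, V¹ = Λ_{J,L}·L, V² = Λ_{J,L}·V¹ where Λ_{J,L} = D_J·L̂. Then there exists a choice of J and L for which V⁰, V¹, V² are linearly independent in ℝ³. -/

import Mathlib

open Matrix

/-- There exist `J = diag(J₁,J₂,J₃)` with pairwise distinct entries and `L` with
`L₁L₂L₃ ≠ 0` such that `V⁰ = L`, `V¹ = Λ L`, `V² = Λ² L` are linearly independent,
where `Λ = D_J · L̂`. -/
theorem stmt_15 :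
    ∃ (J L : Fin 3 → ℝ),
      (J 0 ≠ J 1 ∧ J 1 ≠ J 2 ∧ J 0 ≠ J 2) ∧ L 0 * L 1 * L 2 ≠ 0 ∧
      (let Λ : Matrix (Fin 3) (Fin 3) ℝ :=
        (Matrix.diagonal ![J 2 - J 1, J 0 - J 2, J 1 - J 0]) *
          Matrix.of ![![0, L 2, L 1], ![L 2, 0, L 0], ![L 1, L 0, 0]]
       LinearIndependent ℝ ![L, Λ.mulVec L, Λ.mulVec (Λ.mulVec L)]) := by
  refine ⟨![0, 1, 3], ![1, 1, 1], ⟨by norm_num, by norm_num [Matrix.cons_val_two, Matrix.vecHead, Matrix.vecTail], by norm_num [Matrix.cons_val_two, Matrix.vecHead, Matrix.vecTail]⟩, by norm_num [Matrix.cons_val_two, Matrix.vecHead, Matrix.vecTail], ?_⟩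
  intro Λ
  have hΛ : Λ = Matrix.of ![![0, 2, 2], ![-3, 0, -3], ![1, 1, 0]] := by
    ext i j
    fin_cases i <;> fin_cases j <;>
      simp [Λ, Matrix.mul_apply, Fin.sum_univ_three, Matrix.diagonal, Matrix.vecHead, Matrix.vecTail] <;> norm_num
  have h1 : Λ.mulVec ![1, 1, 1] = ![4, -6, 2] := by
    rw [hΛ]
    funext i
    fin_cases i <;> simp [Matrix.mulVec, dotProduct, Fin.sum_univ_three] <;> norm_num
  have h2 : Λ.mulVec ![4, -6, 2] = ![-8, -18, -2] := by
    rw [hΛ]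
    funext i
    fin_cases i <;> simp [Matrix.mulVec, dotProduct, Fin.sum_univ_three] <;> norm_num
  rw [h1, h2]
  have : LinearIndependent ℝ (fun i => (Matrix.of ![(![1,1,1] : Fin 3 → ℝ), ![4,-6,2], ![-8,-18,-2]]) i) := by
    rw [show (fun i => (Matrix.of ![(![1,1,1] : Fin 3 → ℝ), ![4,-6,2], ![-8,-18,-2]]) i) = (Matrix.of ![(![1,1,1] : Fin 3 → ℝ), ![4,-6,2], ![-8,-18,-2]]).row from rfl]
    rw [Matrix.linearIndependent_rows_iff_isUnit]
    rw [Matrix.isUnit_iff_isUnit_det]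
    rw [isUnit_iff_ne_zero, Matrix.det_fin_three]
    norm_num [Matrix.cons_val_two, Matrix.vecHead, Matrix.vecTail]
  convert this using 1
  ext i j
  fin_cases i <;> fin_cases j <;> rfl
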